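/- Fix ℓ ∈ ℕ₀ and d = (d_1,…,d_ℓ), r = (r_1,…,r_ℓ) ∈ ℕ^ℓ with d_i ≥ r_i for all i ∈ [ℓ], and set m_ℓ := Σ_{k=1}^ℓ (r_k − 1)·∏_{i=k+1}^ℓ d_i. If n ≥ m_ℓ, then there exists an (actual) polytope P belonging to the class Q̂_ℓ with dim(P) = m_ℓ. -/

import Mathlib

open Pointwise

noncomputable section SparseMaxout

/-- Vectors in `ℝ^n`. -/
abbrev Vec (n : ℕ) := Fin n → ℝ

/-- A polytope is the convex hull of a finite nonempty set of points. -/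
def IsPolytope {n : ℕ} (P : Set (Vec n)) : Prop :=
  ∃ s : Finset (Vec n), s.Nonempty ∧ P = convexHull ℝ (s : Set (Vec n))

/-- A simplex is the convex hull of a finite nonempty affinely independent set of points. -/
def IsSimplex {n : ℕ} (S : Set (Vec n)) : Prop :=
  ∃ (k : ℕ) (pts : Fin k → Vec n), 0 < k ∧ AffineIndependent ℝ pts ∧
    S = convexHull ℝ (Set.range pts)

/-- The support function `f_P(x) = max_{a ∈ P} ⟨a, x⟩` of a set `P`. -/
def suppFn {n : ℕ} (P : Set (Vec n)) (x : Vec n) : ℝ :=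
  sSup ((fun a => ∑ i, a i * x i) '' P)

/-- The dimension of a polytope: the dimension of its affine hull. -/
def polyDim {n : ℕ} (P : Set (Vec n)) : ℕ :=
  Module.finrank ℝ (affineSpan ℝ P).direction

/-- A (representative of a) virtual polytope: a pair `(P, Q)` standing for `P - Q`. -/
abbrev VP (n : ℕ) := Set (Vec n) × Set (Vec n)

/-- Two pairs represent the same virtual polytope: `P₁ - Q₁ = P₂ - Q₂` iff
`P₁ + Q₂ = P₂ + Q₁` (Minkowski sums). -/
def vEquiv {n : ℕ} (A B : VP n) : Prop :=
  A.1 + B.2 = B.1 + A.2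

/-- Both components are polytopes. -/
def IsPolyPair {n : ℕ} (A : VP n) : Prop :=
  IsPolytope A.1 ∧ IsPolytope A.2

/-- Scalar multiple of a virtual polytope: `λ(P - Q) := λP - λQ`. -/
def vSMul {n : ℕ} (c : ℝ) (A : VP n) : VP n := (c • A.1, c • A.2)

/-- Convex hull of finitely many virtual polytopes:
`conv(P₁-Q₁, …, P_m-Q_m) := conv(⋃ᵢ (Pᵢ + Σ_{k≠i} Q_k)) - Σ_k Q_k`. -/
def vConv {n m : ℕ} (V : Fin m → VP n) : VP n :=
  (convexHull ℝ (⋃ i, ((V i).1 + ∑ k ∈ Finset.univ.erase i, (V k).2)),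
   ∑ k, (V k).2)

/-- The dimension of a virtual polytope: `min{dim(A + B) : V = A - B}` over
polytope representations. -/
def vDim {n : ℕ} (V : VP n) : ℕ :=
  sInf {m | ∃ A B : Set (Vec n), IsPolytope A ∧ IsPolytope B ∧
    vEquiv (A, B) V ∧ polyDim (A + B) = m}

/-- Support function of a virtual polytope: `f_{P-Q} := f_P - f_Q`. -/
def vSuppFn {n : ℕ} (V : VP n) (x : Vec n) : ℝ :=
  suppFn V.1 x - suppFn V.2 x

/-- The recursively defined classes `Q̂_ℓ` of virtual polytopes dual to sparse maxout
networks with indegree constraints `d` and ranks `r` (layer `k` uses `d k`, `r k`);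
membership is up to equality of virtual polytopes. -/
def Qhat (n : ℕ) (d r : ℕ → ℕ) : ℕ → Set (VP n)
  | 0 => {V | IsPolyPair V ∧ ∃ v : Vec n, vEquiv V ({v}, {0})}
  | (k+1) => {V | IsPolyPair V ∧
      ∃ (α : Fin (r (k+1)) → Fin (d (k+1)) → ℝ) (W : Fin (d (k+1)) → VP n),
        (∀ j, W j ∈ Qhat n d r k) ∧
        vEquiv V (vConv (fun i => ∑ j, vSMul (α i j) (W j)))}

/-- `Q_n(ℓ,d,r)`: finite real linear combinations of elements of `Q̂_ℓ`. -/
def Qfull (n : ℕ) (d r : ℕ → ℕ) (ℓ : ℕ) : Set (VP n) :=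
  {V | IsPolyPair V ∧ ∃ (p : ℕ) (c : Fin p → ℝ) (W : Fin p → VP n),
    (∀ i, W i ∈ Qhat n d r ℓ) ∧ vEquiv V (∑ i, vSMul (c i) (W i))}

/-- `m_ℓ = Σ_{k=1}^ℓ (r_k - 1) ∏_{i=k+1}^ℓ d_i`. -/
def mval (d r : ℕ → ℕ) (ℓ : ℕ) : ℕ :=
  ∑ k ∈ Finset.Icc 1 ℓ, (r k - 1) * ∏ i ∈ Finset.Icc (k+1) ℓ, d i

/-- The recursively defined classes `N̂_ℓ` of functions computed by a single output
neuron of an indegree-`d`-constrained rank-`r` maxout network with `ℓ` hidden layers. -/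
def Nhat (n : ℕ) (d r : ℕ → ℕ) : ℕ → Set ((Vec n) → ℝ)
  | 0 => {f | ∃ v : Vec n, f = fun x => ∑ i, v i * x i}
  | (k+1) => {f | ∃ (α : Fin (r (k+1)) → Fin (d (k+1)) → ℝ)
      (g : Fin (d (k+1)) → (Vec n) → ℝ),
      (∀ j, g j ∈ Nhat n d r k) ∧
      f = fun x => ⨆ i, ∑ j, α i j * g j x}

/-- `N_n(ℓ,d,r)`: finite real linear combinations of functions in `N̂_ℓ`. -/
def Nfull (n : ℕ) (d r : ℕ → ℕ) (ℓ : ℕ) : Set ((Vec n) → ℝ) :=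
  {f | ∃ (p : ℕ) (c : Fin p → ℝ) (g : Fin p → (Vec n) → ℝ),
    (∀ i, g i ∈ Nhat n d r ℓ) ∧ f = fun x => ∑ i, c i * g i x}

/-- Unconstrained single-neuron classes `N̂_ℓ` (no indegree constraint). -/
def NhatU (n : ℕ) (r : ℕ → ℕ) : ℕ → Set ((Vec n) → ℝ)
  | 0 => {f | ∃ v : Vec n, f = fun x => ∑ i, v i * x i}
  | (k+1) => {f | ∃ (m : ℕ) (α : Fin (r (k+1)) → Fin m → ℝ)
      (g : Fin m → (Vec n) → ℝ),
      (∀ j, g j ∈ NhatU n r k) ∧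
      f = fun x => ⨆ i, ∑ j, α i j * g j x}

/-- `N_n(ℓ,r)`: finite real linear combinations of functions in the unconstrained `N̂_ℓ`. -/
def NfullU (n : ℕ) (r : ℕ → ℕ) (ℓ : ℕ) : Set ((Vec n) → ℝ) :=
  {f | ∃ (p : ℕ) (c : Fin p → ℝ) (g : Fin p → (Vec n) → ℝ),
    (∀ i, g i ∈ NhatU n r ℓ) ∧ f = fun x => ∑ i, c i * g i x}

/-- `MAX_n(m)`: finite real linear combinations of maxima of at most `m` linear functions. -/
def MAXn (n m : ℕ) : Set ((Vec n) → ℝ) :=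
  {f | ∃ (p : ℕ) (β : Fin p → ℝ) (a : Fin p → Fin m → Vec n),
    f = fun x => ∑ i, β i * ⨆ j, ∑ t, a i j t * x t}
section AuxLemmas

variable {n : ℕ}

lemma zeroSet_eq : ({0} : Set (Vec n)) = 0 := rfl

lemma isPolytope_singleton (v : Vec n) : IsPolytope ({v} : Set (Vec n)) :=
  ⟨{v}, ⟨v, Finset.mem_singleton_self v⟩, by simp⟩

lemma IsPolytope.convex {P : Set (Vec n)} (h : IsPolytope P) : Convex ℝ P := by
  obtain ⟨s, -, rfl⟩ := h; exact convex_convexHull ℝ _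

lemma convexHull_finsetSum {ι : Type*} (s : Finset ι) (f : ι → Set (Vec n)) :
    convexHull ℝ (∑ i ∈ s, f i) = ∑ i ∈ s, convexHull ℝ (f i) := by
  classical
  induction s using Finset.induction_on with
  | empty => simp [← zeroSet_eq]
  | insert _ _ h ih => rw [Finset.sum_insert h, Finset.sum_insert h, convexHull_add, ih]

lemma setFinite_finsetSum {ι : Type*} (s : Finset ι) (f : ι → Set (Vec n))
    (h : ∀ i ∈ s, (f i).Finite) : (∑ i ∈ s, f i).Finite := by
  classical
  induction s using Finset.induction_on with
  | empty => rw [Finset.sum_empty, ← zeroSet_eq]; exact Set.finite_singleton 0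
  | insert _ _ hi ih =>
      rw [Finset.sum_insert hi]
      exact Set.Finite.add (h _ (Finset.mem_insert_self _ _))
        (ih fun i hi' => h i (Finset.mem_insert_of_mem hi'))

lemma convexHull_iUnion_convexHull {ι : Type*} (f : ι → Set (Vec n)) :
    convexHull ℝ (⋃ i, convexHull ℝ (f i)) = convexHull ℝ (⋃ i, f i) := by
  apply le_antisymm
  · exact convexHull_min (Set.iUnion_subset fun i =>
      convexHull_mono (Set.subset_iUnion f i)) (convex_convexHull ℝ _)
  · exact convexHull_mono (Set.iUnion_mono fun i => subset_convexHull ℝ _)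

lemma single_eq_smul (c : Fin n) (a : ℝ) :
    (Pi.single c a : Vec n) = a • (Pi.single c (1 : ℝ) : Vec n) := by
  funext x
  by_cases h : x = c
  · subst h; simp
  · simp [Pi.single_eq_of_ne h]

lemma mem_span_single {m : ℕ} (g : Fin m → Fin n) (z : Vec n)
    (hz : ∀ c, (∀ t, c ≠ g t) → z c = 0) :
    z ∈ Submodule.span ℝ (Set.range fun t => Pi.single (g t) (1 : ℝ)) := by
  have hz' : z = ∑ c, Pi.single c (z c) := (Finset.univ_sum_single z).symm
  rw [hz']
  apply Submodule.sum_mem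
  intro c _
  by_cases h : ∀ t, c ≠ g t
  · rw [hz c h, Pi.single_zero]; exact Submodule.zero_mem _
  · push_neg at h
    obtain ⟨t, rfl⟩ := h
    rw [single_eq_smul]
    exact Submodule.smul_mem _ _ (Submodule.subset_span ⟨t, rfl⟩)

lemma mval_succ (d r : ℕ → ℕ) (ℓ : ℕ) :
    mval d r (ℓ+1) = d (ℓ+1) * mval d r ℓ + (r (ℓ+1) - 1) := by
  unfold mval
  rw [show Finset.Icc 1 (ℓ+1) = insert (ℓ+1) (Finset.Icc 1 ℓ) by
    rw [← Finset.insert_Icc_right_eq_Icc_add_one (by omega)]]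
  rw [Finset.sum_insert (by simp)]
  rw [show (∏ i ∈ Finset.Icc (ℓ+1+1) (ℓ+1), d i) = 1 from
    by rw [Finset.Icc_eq_empty (by omega), Finset.prod_empty]]
  rw [Finset.mul_sum]
  rw [Finset.sum_congr rfl (fun k hk => ?_)]
  · ring
  · have hk' := (Finset.mem_Icc.1 hk).2
    rw [show Finset.Icc (k+1) (ℓ+1) = insert (ℓ+1) (Finset.Icc (k+1) ℓ) by
      rw [← Finset.insert_Icc_right_eq_Icc_add_one (by omega)]]
    rw [Finset.prod_insert (by simp), ]
    ring

end AuxLemmas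
section KeyLemma

lemma Qhat_key {n : ℕ} (d r : ℕ → ℕ) (hr : ∀ k, 1 ≤ r k) (hdr : ∀ k, r k ≤ d k) :
    ∀ ℓ : ℕ, ∀ g : Fin (mval d r ℓ) → Fin n, Function.Injective g → ∀ v : Vec n,
    ∃ P : Set (Vec n), IsPolytope P ∧ (P, ({0} : Set (Vec n))) ∈ Qhat n d r ℓ ∧
      v ∈ P ∧ (∀ t, v + Pi.single (g t) 1 ∈ P) ∧
      (∀ x ∈ P, ∀ c : Fin n, (∀ t, c ≠ g t) → x c = v c) := by
  intro ℓ
  induction ℓ with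
  | zero =>
    intro g hg v
    refine ⟨{v}, isPolytope_singleton v,
      ⟨⟨isPolytope_singleton v, isPolytope_singleton 0⟩, v, rfl⟩,
      Set.mem_singleton v, ?_, ?_⟩
    · intro t; exfalso; have ht := t.2; simp [mval] at ht
    · rintro x rfl c _; rfl
  | succ ℓ IH =>
    intro g hg v
    set m := mval d r ℓ with hm
    set d' := d (ℓ+1) with hd'
    set r' := r (ℓ+1) with hr'
    have hM : mval d r (ℓ+1) = d' * m + (r' - 1) := mval_succ d r ℓ
    have hr1 : 1 ≤ r' := hr _
    have hrd : r' ≤ d' := hdr _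
    have hblock : ∀ (j : Fin d') (t : Fin m), j.1 * m + t.1 < mval d r (ℓ+1) := by
      intro j t
      rw [hM]
      have h1 : j.1 * m + t.1 < (j.1 + 1) * m := by
        have := t.2; nlinarith
      have h2 : (j.1 + 1) * m ≤ d' * m := Nat.mul_le_mul_right m j.2
      omega
    have hextra : ∀ k : ℕ, k < r' - 1 → d' * m + k < mval d r (ℓ+1) := by
      intro k hk; omega
    set gB : ∀ j : Fin d', Fin m → Fin n :=
      fun j t => g ⟨j.1 * m + t.1, hblock j t⟩ with hgB
    set gE : ℕ → Vec n := fun k =>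
      if h : k < r' - 1 then Pi.single (g ⟨d' * m + k, hextra k h⟩) 1 else 0 with hgE
    set E : Vec n := ∑ k ∈ Finset.range (r' - 1), gE k with hE
    set w : Vec n := ((r' : ℝ) + 1)⁻¹ • (v - E) with hw
    set Δ : ℕ → Vec n := fun i => if i = 0 then 0 else gE (i - 1) with hΔ
    set U : ℕ → Vec n := fun j => if j < r' then w + Δ j else 0 with hU
    set u : Fin d' → Vec n := fun j => U j.1 with hu
    set α : Fin r' → Fin d' → ℝ := fun i j => if j.1 = i.1 then 2 else 1 with hα
    have hαpos : ∀ i j, 0 < α i j := by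
      intro i j; by_cases h : j.1 = i.1 <;> simp [hα, h]
    -- polytopes from the inductive hypothesis
    have hgBinj : ∀ j, Function.Injective (gB j) := by
      intro j t t' h
      have h2 : j.1 * m + t.1 = j.1 * m + t'.1 := congrArg Fin.val (hg h)
      exact Fin.ext (by omega)
    choose Pb hPbPoly hPbQ hPbmem hPbe hPbfix using fun j => IH (gB j) (hgBinj j) (u j)
    set A : Fin r' → Set (Vec n) := fun i => ∑ j, α i j • Pb j with hA
    set P : Set (Vec n) := convexHull ℝ (⋃ i, A i) with hP
    -- the translation computation
    have hsum_u : ∑ j : Fin d', u j = (r' : ℝ) • w + E := by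
      rw [hu]
      rw [Fin.sum_univ_eq_sum_range U d']
      rw [← Finset.sum_subset (Finset.range_subset_range.2 hrd)
        (fun x _ hx => if_neg (by simpa using hx))]
      rw [Finset.sum_congr rfl (fun x hx => if_pos (Finset.mem_range.1 hx))]
      rw [Finset.sum_add_distrib, Finset.sum_const, Finset.card_range]
      rw [← Nat.cast_smul_eq_nsmul ℝ]
      congr 1
      rw [show r' = (r' - 1) + 1 from (Nat.succ_pred_eq_of_pos hr1).symm]
      rw [Finset.sum_range_succ']
      simp only [hΔ, Nat.succ_ne_zero, if_neg, Nat.add_sub_cancel, if_pos rfl]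
      simp [hE]
    have hb : ∀ i : Fin r', (∑ j, α i j • u j) = v + Δ i.1 := by
      intro i
      have hstep : ∀ j : Fin d', α i j • u j =
          u j + (if j = (⟨i.1, lt_of_lt_of_le i.2 hrd⟩ : Fin d') then u j else 0) := by
        intro j
        by_cases h : j.1 = i.1
        · rw [if_pos (Fin.ext h), hα]
          simp only [if_pos h]
          rw [two_smul]
        · rw [if_neg (fun hc => h (congrArg Fin.val hc)), hα]
          simp only [if_neg h]
          rw [one_smul, add_zero]
      rw [Finset.sum_congr rfl (fun j _ => hstep j), Finset.sum_add_distrib,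
        Finset.sum_ite_eq' Finset.univ _ u, if_pos (Finset.mem_univ _), hsum_u]
      have hσ : u ⟨i.1, lt_of_lt_of_le i.2 hrd⟩ = w + Δ i.1 := if_pos i.2
      rw [hσ]
      have hw1 : ((r' : ℝ) + 1) • w = v - E := by
        rw [hw, smul_smul, mul_inv_cancel₀ (by positivity), one_smul]
      have : (r' : ℝ) • w + E + (w + Δ i.1) = ((r' : ℝ) + 1) • w + E + Δ i.1 := by
        rw [add_smul, one_smul]; abel
      rw [this, hw1]
      abel
    have hbmem : ∀ i : Fin r', v + Δ i.1 ∈ A i := by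
      intro i
      rw [← hb i]
      exact Set.finset_sum_mem_finset_sum Finset.univ _ _
        (fun j _ => Set.smul_mem_smul_set (hPbmem j))
    have hAP : ∀ i, A i ⊆ P := fun i =>
      (Set.subset_iUnion A i).trans (subset_convexHull ℝ _)
    have hvP : v ∈ P := by
      have h0 := hbmem ⟨0, hr1⟩
      simp only [hΔ, if_pos rfl, add_zero] at h0
      exact hAP _ h0
    -- the extreme points
    have hαval : ∀ (i : Fin r') (jj : Fin d'), α i jj = 2 ∨ α i jj = 1 := by
      intro i jj
      rw [hα]
      by_cases h : jj.1 = i.1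
      · left; simp [h]
      · right; simp [h]
    have hePoints : ∀ t0 : Fin (mval d r (ℓ+1)), v + Pi.single (g t0) 1 ∈ P := by
      intro t0
      by_cases hc : t0.1 < d' * m
      · -- block case
        have hm0 : 0 < m := Nat.pos_of_ne_zero (fun h => by
          rw [h, Nat.mul_zero] at hc; omega)
        set j : Fin d' := ⟨t0.1 / m, Nat.div_lt_of_lt_mul (by rw [Nat.mul_comm]; exact hc)⟩ with hj
        set t : Fin m := ⟨t0.1 % m, Nat.mod_lt _ hm0⟩ with ht
        have hgt : g t0 = gB j t := by
          rw [hgB]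
          exact congrArg g (Fin.ext (by
            show t0.1 = t0.1 / m * m + t0.1 % m
            rw [Nat.mul_comm]
            exact (Nat.div_add_mod t0.1 m).symm))
        set i0 : Fin r' := ⟨0, hr1⟩ with hi0
        set a : ℝ := (α i0 j)⁻¹ with ha
        have ha0 : 0 < a := by rw [ha]; exact inv_pos.2 (hαpos i0 j)
        have ha1 : a ≤ 1 := by
          rw [ha]
          rcases hαval i0 j with h | h <;> rw [h] <;> norm_num
        set y : Fin d' → Vec n := fun j' =>
          if j' = j then u j + a • (Pi.single (g t0) 1 : Vec n) else u j' with hy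
        have hymem : ∀ j', y j' ∈ Pb j' := by
          intro j'
          by_cases h : j' = j
          · simp only [hy, if_pos h]
            have hcvx := (hPbPoly j').convex
            have hmem := hcvx (hPbmem j') (hPbe j' t) (a := 1 - a) (b := a)
              (by linarith) (le_of_lt ha0) (by ring)
            have heq : (1 - a) • u j' + a • (u j' + Pi.single (gB j' t) 1)
                = u j' + a • (Pi.single (gB j' t) 1 : Vec n) := by
              module
            rw [heq] at hmem
            rw [hgt, ← h]
            exact hmem
          · simp only [hy, if_neg h]; exact hPbmem j'
        have hsum : ∑ j', α i0 j' • y j' = v + Pi.single (g t0) 1 := by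
          have hstep : ∀ j', α i0 j' • y j' =
              α i0 j' • u j' + (if j' = j then (Pi.single (g t0) 1 : Vec n) else 0) := by
            intro j'
            by_cases h : j' = j
            · have hval : y j' = u j + a • (Pi.single (g t0) 1 : Vec n) := by
                simp only [hy, if_pos h]
              rw [hval, h, if_pos rfl, smul_add, smul_smul, ha,
                mul_inv_cancel₀ (ne_of_gt (hαpos i0 j)), one_smul]
            · simp only [hy, if_neg h, add_zero]
          rw [Finset.sum_congr rfl (fun j' _ => hstep j'), Finset.sum_add_distrib,
            Finset.sum_ite_eq' Finset.univ j (fun _ => (Pi.single (g t0) 1 : Vec n)),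
            if_pos (Finset.mem_univ _), hb i0]
          have : Δ (i0 : ℕ) = 0 := by simp [hΔ, hi0]
          rw [this, add_zero]
        have : v + Pi.single (g t0) 1 ∈ A i0 := by
          rw [← hsum]
          exact Set.finset_sum_mem_finset_sum Finset.univ _ _
            (fun j' _ => Set.smul_mem_smul_set (hymem j'))
        exact hAP i0 this
      · -- extra coordinate case
        have hk : t0.1 - d' * m < r' - 1 := by
          have := t0.2; omega
        set i : Fin r' := ⟨(t0.1 - d' * m) + 1, by omega⟩ with hi
        have hΔi : Δ i.1 = Pi.single (g t0) 1 := by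
          have h1 : Δ i.1 = gE (t0.1 - d' * m) := by
            rw [hΔ]
            show (if (t0.1 - d' * m) + 1 = 0 then 0 else gE ((t0.1 - d' * m) + 1 - 1))
              = gE (t0.1 - d' * m)
            rw [if_neg (Nat.succ_ne_zero _), Nat.add_sub_cancel]
          rw [h1, hgE]
          show (if h : t0.1 - d' * m < r' - 1
            then (Pi.single (g ⟨d' * m + (t0.1 - d' * m), hextra _ h⟩) 1 : Vec n) else 0)
              = Pi.single (g t0) 1
          rw [dif_pos hk]
          exact congrArg (fun c => (Pi.single c 1 : Vec n))
            (congrArg g (Fin.ext (by simp; omega)))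
        have hmem := hbmem i
        rw [hΔi] at hmem
        exact hAP i hmem
    -- fixed coordinates
    have hfix : ∀ x ∈ P, ∀ c : Fin n, (∀ t, c ≠ g t) → x c = v c := by
      intro x hx c hc
      have hF : Convex ℝ {z : Vec n | z c = v c} := by
        intro z hz y hy a b ha hb hab
        simp only [Set.mem_setOf_eq] at *
        simp only [Pi.add_apply, Pi.smul_apply, smul_eq_mul, hz, hy]
        rw [← add_mul, hab, one_mul]
      have hsub : (⋃ i, A i) ⊆ {z : Vec n | z c = v c} := by
        intro x hx
        obtain ⟨i, hxA⟩ := Set.mem_iUnion.1 hx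
        rw [hA] at hxA
        obtain ⟨y, hy, hsum⟩ := (Set.mem_fintype_sum _ _).1 hxA
        have hz : ∀ j, ∃ z ∈ Pb j, α i j • z = y j := fun j =>
          Set.mem_smul_set.1 (hy j)
        choose z hzmem hzeq using hz
        have hyc : ∀ j, y j c = α i j * u j c := by
          intro j
          rw [← hzeq j]
          have : z j c = u j c := hPbfix j (z j) (hzmem j) c
            (fun t => hc ⟨j.1 * m + t.1, hblock j t⟩)
          simp [this]
        have hxc : x c = ∑ j, y j c := by
          rw [← hsum]; exact Finset.sum_apply c Finset.univ y
        rw [Set.mem_setOf_eq, hxc]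
        have : ∑ j, y j c = (∑ j, α i j • u j) c := by
          rw [Finset.sum_apply]
          exact Finset.sum_congr rfl (fun j _ => by rw [hyc j]; simp)
        rw [this, hb i]
        have hΔc : Δ i.1 c = 0 := by
          rw [hΔ]
          show (if i.1 = 0 then (0:Vec n) else gE (i.1 - 1)) c = 0
          by_cases h : i.1 = 0
          · rw [if_pos h]; rfl
          · rw [if_neg h, hgE]
            show (if hh : i.1 - 1 < r' - 1
              then (Pi.single (g ⟨d' * m + (i.1-1), hextra _ hh⟩) 1 : Vec n) else 0) c = 0
            by_cases hh : i.1 - 1 < r' - 1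
            · rw [dif_pos hh]
              exact Pi.single_eq_of_ne (hc _) 1
            · rw [dif_neg hh]; rfl
        simp [hΔc]
      exact convexHull_min hsub hF hx
    -- polytope property
    have hPoly : IsPolytope P := by
      choose F hFne hFeq using fun j => hPbPoly j
      have hAconv : ∀ i, A i = convexHull ℝ (∑ j, α i j • ((F j : Set (Vec n)))) := by
        intro i
        calc A i = ∑ j, convexHull ℝ (α i j • ((F j : Set (Vec n)))) := by
              show (∑ j, α i j • Pb j) = _
              exact Finset.sum_congr rfl (fun j _ => by rw [hFeq j, convexHull_smul])
          _ = convexHull ℝ (∑ j, α i j • ((F j : Set (Vec n)))) :=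
              (convexHull_finsetSum _ _).symm
      set T : Set (Vec n) := ⋃ i, ∑ j, α i j • ((F j : Set (Vec n))) with hT
      have hPT : P = convexHull ℝ T := by
        rw [hP, Set.iUnion_congr hAconv]
        exact convexHull_iUnion_convexHull _
      have hTfin : T.Finite := Set.finite_iUnion (fun i =>
        setFinite_finsetSum _ _ (fun j _ => Set.Finite.smul_set (F j).finite_toSet))
      have hTne : T.Nonempty := by
        choose p hp using hFne
        exact ⟨_, Set.mem_iUnion.2 ⟨⟨0, hr1⟩, Set.finset_sum_mem_finset_sum _ _ _
          (fun j _ => Set.smul_mem_smul_set (hp j))⟩⟩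
      refine ⟨hTfin.toFinset, ?_, ?_⟩
      · rwa [Set.Finite.toFinset_nonempty]
      · rw [hPT, Set.Finite.coe_toFinset]
    -- membership in Qhat
    have hQ : (P, ({0} : Set (Vec n))) ∈ Qhat n d r (ℓ+1) := by
      refine ⟨⟨hPoly, isPolytope_singleton 0⟩, α,
        fun j => (Pb j, ({0} : Set (Vec n))), hPbQ, ?_⟩
      have hfst : ∀ i : Fin r',
          (∑ j, vSMul (α i j) (Pb j, ({0} : Set (Vec n)))).1 = A i := by
        intro i
        show (∑ j, vSMul (α i j) (Pb j, ({0} : Set (Vec n)))).1 = ∑ j, α i j • Pb j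
        rw [Prod.fst_sum]
        rfl
      have hsnd : ∀ i : Fin r',
          (∑ j, vSMul (α i j) (Pb j, ({0} : Set (Vec n)))).2 = (0 : Set (Vec n)) := by
        intro i
        rw [Prod.snd_sum]
        rw [Finset.sum_congr rfl (fun j _ =>
          show (vSMul (α i j) (Pb j, ({0} : Set (Vec n)))).2 = (0 : Set (Vec n)) by
            show α i j • ({0} : Set (Vec n)) = 0
            rw [Set.smul_set_singleton, smul_zero, zeroSet_eq])]
        exact Finset.sum_const_zero
      show vEquiv (P, ({0} : Set (Vec n))) _
      unfold vEquiv vConv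
      simp +zetaDelta only [hfst, hsnd]
      simp only [Finset.sum_const_zero, zeroSet_eq, add_zero]
    exact ⟨P, hPoly, hQ, hvP, hePoints, hfix⟩

end KeyLemma
/-- the dimension bound `m_ℓ` is attained by an actual polytope in `Q̂_ℓ`. -/
theorem Qhat_dim_bound_attained {n : ℕ} (ℓ : ℕ) (d r : ℕ → ℕ)
    (hr : ∀ k, 1 ≤ r k) (hdr : ∀ k, r k ≤ d k) (hn : mval d r ℓ ≤ n) :
    ∃ P : Set (Vec n), IsPolytope P ∧ (P, ({0} : Set (Vec n))) ∈ Qhat n d r ℓ ∧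
      polyDim P = mval d r ℓ := by
  set g : Fin (mval d r ℓ) → Fin n := fun t => ⟨t.1, lt_of_lt_of_le t.2 hn⟩ with hg
  have hginj : Function.Injective g := by
    intro a b h
    have h2 : (g a).1 = (g b).1 := congrArg Fin.val h
    exact Fin.ext h2
  obtain ⟨P, hPoly, hQ, hv, he, hfix⟩ := Qhat_key d r hr hdr ℓ g hginj 0
  refine ⟨P, hPoly, hQ, ?_⟩
  unfold polyDim
  rw [direction_affineSpan]
  have hli : LinearIndependent ℝ (fun t => (Pi.single (g t) 1 : Vec n)) := by
    have heq : (fun t => (Pi.single (g t) 1 : Vec n)) = (Pi.basisFun ℝ (Fin n)) ∘ g := by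
      funext t
      simp [Pi.basisFun_apply]
    rw [heq]
    exact (Pi.basisFun ℝ (Fin n)).linearIndependent.comp g hginj
  have hspan : vectorSpan ℝ P =
      Submodule.span ℝ (Set.range fun t => (Pi.single (g t) 1 : Vec n)) := by
    apply le_antisymm
    · rw [vectorSpan_def]
      apply Submodule.span_le.2
      rintro z hz
      obtain ⟨x, hx, y, hy, rfl⟩ := hz
      apply mem_span_single
      intro c hcg
      show x c - y c = 0
      rw [hfix x hx c hcg, hfix y hy c hcg]
      simp
    · apply Submodule.span_le.2
      rintro _ ⟨t, rfl⟩
      have hmem := vsub_mem_vectorSpan ℝ (he t) hv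
      simpa using hmem
  rw [hspan, finrank_span_eq_card hli, Fintype.card_fin]
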